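/- Let μ > 0 and η > 0 satisfy ημ ≤ 1, let κ > 1 be a real number, and let τ ≥ 1 and T ≥ 0 be integers. Then ∑_{t=0}^{T} (1 − ημ/4)^t · (1 − 1/(2κ))^{⌊t/τ⌋} ≤ 2κτ / (1 − ημ/4). -/

import Mathlib

/-- Auxiliary: block decomposition of the sum of `r^(t/τ)` over `range (K*τ)`. -/
lemma sum_pow_div_blocks (r : ℝ) (τ : ℕ) (hτ : 1 ≤ τ) (K : ℕ) :
    ∑ t ∈ Finset.range (K * τ), r ^ (t / τ) = ∑ k ∈ Finset.range K, (τ : ℝ) * r ^ k := by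
  induction K with
  | zero => simp
  | succ K ih =>
    have hsplit : Finset.range ((K + 1) * τ)
        = Finset.range (K * τ) ∪ Finset.Ico (K * τ) ((K + 1) * τ) := by
      rw [Finset.range_eq_Ico, Finset.range_eq_Ico]
      exact (Finset.Ico_union_Ico_eq_Ico (Nat.zero_le _)
        (Nat.mul_le_mul_right τ (Nat.le_succ K))).symm
    rw [hsplit, Finset.sum_union (by
        rw [Finset.range_eq_Ico]
        exact Finset.Ico_disjoint_Ico_consecutive 0 (K * τ) ((K + 1) * τ)),
      ih, Finset.sum_range_succ]
    congr 1
    have : ∀ t ∈ Finset.Ico (K * τ) ((K + 1) * τ), r ^ (t / τ) = r ^ K := by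
      intro t ht
      rw [Finset.mem_Ico] at ht
      congr 1
      exact Nat.div_eq_of_lt_le (by simpa [Nat.mul_comm] using ht.1)
        (by simpa [Nat.mul_comm] using ht.2)
    rw [Finset.sum_congr rfl this, Finset.sum_const, Nat.card_Ico]
    have : (K + 1) * τ - K * τ = τ := by ring_nf; omega
    rw [this, nsmul_eq_mul]

/-- **Summation inequality with block-wise geometric decay (factor 1/4).**
If `0 < μ`, `0 < η`, `η·μ ≤ 1`, `1 < κ`, and `τ ≥ 1`, then
`∑_{t=0}^{T} (1 − ημ/4)^t (1 − 1/(2κ))^{⌊t/τ⌋} ≤ 2κτ/(1 − ημ/4)`. -/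
theorem sum_geom_block_decay_quarter
    (μ η κ : ℝ) (τ T : ℕ)
    (hμ : 0 < μ) (hη : 0 < η) (hημ : η * μ ≤ 1)
    (hκ : 1 < κ) (hτ : 1 ≤ τ) :
    ∑ t ∈ Finset.range (T + 1),
        (1 - η * μ / 4) ^ t * (1 - 1 / (2 * κ)) ^ (t / τ)
      ≤ 2 * κ * (τ : ℝ) / (1 - η * μ / 4) := by
  set r : ℝ := 1 - 1 / (2 * κ) with hr
  have hκ0 : (0 : ℝ) < κ := lt_trans one_pos hκ
  have hlt : 1 / (2 * κ) < 1 := by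
    rw [div_lt_one (by linarith)]; linarith
  have hpos : 0 < 1 / (2 * κ) := by positivity
  have hr0 : 0 < r := by rw [hr]; linarith
  have hr1 : r < 1 := by rw [hr]; linarith
  have hq0 : 0 < 1 - η * μ / 4 := by nlinarith [mul_pos hη hμ]
  have hq1 : 1 - η * μ / 4 ≤ 1 := by nlinarith [mul_pos hη hμ]
  -- Step 1: drop the factor (1 - ημ/4)^t ≤ 1
  have step1 : ∑ t ∈ Finset.range (T + 1),
      (1 - η * μ / 4) ^ t * r ^ (t / τ)
      ≤ ∑ t ∈ Finset.range (T + 1), r ^ (t / τ) := by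
    apply Finset.sum_le_sum
    intro t _
    have h1 : (1 - η * μ / 4) ^ t ≤ 1 := pow_le_one₀ (le_of_lt hq0) hq1
    have h2 : (0 : ℝ) ≤ r ^ (t / τ) := le_of_lt (pow_pos hr0 _)
    nlinarith
  -- Step 2: extend to a full number of blocks
  set K : ℕ := T / τ + 1 with hK
  have hsub : Finset.range (T + 1) ⊆ Finset.range (K * τ) := by
    apply Finset.range_subset_range.2
    have h1 := Nat.lt_div_mul_add (a := T) (Nat.lt_of_lt_of_le one_pos hτ)
    have : K * τ = T / τ * τ + τ := by rw [hK]; ring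
    omega
  have step2 : ∑ t ∈ Finset.range (T + 1), r ^ (t / τ)
      ≤ ∑ t ∈ Finset.range (K * τ), r ^ (t / τ) :=
    Finset.sum_le_sum_of_subset_of_nonneg hsub
      (fun t _ _ => le_of_lt (pow_pos hr0 _))
  -- Step 3: block decomposition and geometric bound
  have step3 : ∑ t ∈ Finset.range (K * τ), r ^ (t / τ) ≤ (τ : ℝ) * (2 * κ) := by
    rw [sum_pow_div_blocks r τ hτ K, ← Finset.mul_sum]
    have hgeom : ∑ k ∈ Finset.range K, r ^ k ≤ 2 * κ := by
      have h1r : 1 - r = 1 / (2 * κ) := by rw [hr]; ring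
      have hb := geom_sum_Ico_le_of_lt_one (le_of_lt hr0) hr1 (m := 0) (n := K)
      rw [pow_zero, h1r, one_div_one_div, ← Finset.range_eq_Ico] at hb
      exact hb
    have hτ0 : (0 : ℝ) ≤ τ := Nat.cast_nonneg τ
    exact mul_le_mul_of_nonneg_left hgeom hτ0
  -- Step 4: compare with RHS
  have step4 : (τ : ℝ) * (2 * κ) ≤ 2 * κ * (τ : ℝ) / (1 - η * μ / 4) := by
    rw [le_div_iff₀ hq0]
    have hτ0 : (0 : ℝ) ≤ τ := Nat.cast_nonneg τ
    nlinarith [mul_pos hη hμ, mul_nonneg hτ0 (le_of_lt hκ0)]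
  linarith [step1, step2, step3, step4]
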